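/- Let G₀ = ⟨a, b | a^{2k+1} b², (a^k b)^{2k+1} a^{2k+1} (a^k b)^{2k+1}⟩, let ξ be a primitive (2k+1)-st root of unity, and let θ be an integer. Then the assignments ρ_θ(a) = diag(t ξ^{−θ}, t ξ^{θ}) and ρ_θ(b) = [[0, t^{−k−1} ξ^{kθ}], [t^{−k} ξ^{−kθ}, 0]] (2×2 matrices over ℂ[t, t^{-1}]) extend to a group homomorphism ρ_θ : G₀ → GL₂(ℂ[t^{±1}]), i.e. both relators are sent to the identity matrix. -/

import Mathlib

open LaurentPolynomial Matrix

lemma diag_pow {R : Type*} [CommRing R] (c d : R) (n : ℕ) :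
    (!![c, 0; 0, d] : Matrix (Fin 2) (Fin 2) R) ^ n = !![c ^ n, 0; 0, d ^ n] := by
  induction n with
  | zero => simp [Matrix.one_fin_two]
  | succ n ih => rw [pow_succ, ih, Matrix.mul_fin_two]; simp [pow_succ]


/-- Relators of `G₀ = ⟨a, b | a^{2k+1} b², (a^k b)^{2k+1} a^{2k+1} (a^k b)^{2k+1}⟩`. -/
def G0Rels (k : ℕ) : Set (FreeGroup (Fin 2)) :=
  {FreeGroup.of 0 ^ (2 * k + 1) * FreeGroup.of 1 ^ 2,
   (FreeGroup.of 0 ^ k * FreeGroup.of 1) ^ (2 * k + 1) * FreeGroup.of 0 ^ (2 * k + 1) *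
     (FreeGroup.of 0 ^ k * FreeGroup.of 1) ^ (2 * k + 1)}

theorem metabelian_rep_well_defined (k : ℕ) (hk : 0 < k) (θ : ℤ) :
    let ξ : ℂ := Complex.exp (2 * Real.pi * Complex.I / (2 * k + 1))
    let Ma : Matrix (Fin 2) (Fin 2) (LaurentPolynomial ℂ) :=
      !![LaurentPolynomial.C (ξ ^ (-θ)) * LaurentPolynomial.T 1, 0;
         0, LaurentPolynomial.C (ξ ^ θ) * LaurentPolynomial.T 1]
    let Mb : Matrix (Fin 2) (Fin 2) (LaurentPolynomial ℂ) :=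
      !![0, LaurentPolynomial.C (ξ ^ ((k : ℤ) * θ)) * LaurentPolynomial.T (-((k : ℤ) + 1));
         LaurentPolynomial.C (ξ ^ (-(k : ℤ) * θ)) * LaurentPolynomial.T (-(k : ℤ)), 0]
    Ma ^ (2 * k + 1) * Mb ^ 2 = 1 ∧
    (Ma ^ k * Mb) ^ (2 * k + 1) * Ma ^ (2 * k + 1) * (Ma ^ k * Mb) ^ (2 * k + 1) = 1 ∧
    ∃ ρ : PresentedGroup (G0Rels k) →* Matrix (Fin 2) (Fin 2) (LaurentPolynomial ℂ),
      ρ (PresentedGroup.of 0) = Ma ∧ ρ (PresentedGroup.of 1) = Mb ∧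
      ∀ g, IsUnit (ρ g) := by
  intro ξ Ma Mb
  have hξ0 : ξ ≠ 0 := Complex.exp_ne_zero _
  -- ξ^(2k+1) = 1
  have hcast : ((2 * k + 1 : ℕ) : ℂ) ≠ 0 := Nat.cast_ne_zero.mpr (Nat.succ_ne_zero _)
  have hξpow : ξ ^ (2 * k + 1) = 1 := by
    show Complex.exp _ ^ (2 * k + 1) = 1
    rw [← Complex.exp_nat_mul]
    have : ((2 * k + 1 : ℕ) : ℂ) * (2 * Real.pi * Complex.I / (2 * (k : ℂ) + 1)) =
        2 * Real.pi * Complex.I := by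
      have h : (2 * (k : ℂ) + 1) ≠ 0 := by push_cast at hcast ⊢; exact hcast
      field_simp
      push_cast
      ring
    rw [this, Complex.exp_two_pi_mul_I]
  have hξz : ξ ^ ((2 * k + 1 : ℕ) : ℤ) = 1 := by rw [zpow_natCast, hξpow]
  -- generic zpow-nat-pow collapse
  have hzp : ∀ (a : ℤ) (n : ℕ), (ξ ^ a) ^ n = ξ ^ (a * n) := fun a n => by
    rw [← zpow_natCast (ξ ^ a), ← _root_.zpow_mul]
  have hmul : ∀ a b : ℤ, ξ ^ a * ξ ^ b = ξ ^ (a + b) := fun a b => (zpow_add₀ hξ0 a b).symm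
  -- ξ ^ (multiple of 2k+1) = 1
  have hper : ∀ m : ℤ, ξ ^ ((2 * k + 1 : ℕ) * m) = 1 := fun m => by
    rw [_root_.zpow_mul, hξz, _root_.one_zpow]
  -- powers of Ma
  have hentry : ∀ (a : ℤ) (n : ℕ),
      (LaurentPolynomial.C (ξ ^ a) * LaurentPolynomial.T 1 : LaurentPolynomial ℂ) ^ n =
        LaurentPolynomial.C (ξ ^ (a * n)) * LaurentPolynomial.T n := by
    intro a n
    rw [mul_pow, ← map_pow, hzp, T_pow, mul_comm (n : ℤ) 1, one_mul]
  have hMa : ∀ n : ℕ, Ma ^ n =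
      !![LaurentPolynomial.C (ξ ^ (-θ * n)) * LaurentPolynomial.T n, 0;
         0, LaurentPolynomial.C (ξ ^ (θ * n)) * LaurentPolynomial.T n] := by
    intro n
    show (!![_,_;_,_] : Matrix (Fin 2) (Fin 2) (LaurentPolynomial ℂ)) ^ n = _
    rw [diag_pow, hentry, hentry]
  have hC1 : ∀ a : ℤ, ξ ^ a = 1 → ∀ t : ℤ,
      LaurentPolynomial.C (ξ ^ a) * LaurentPolynomial.T t = LaurentPolynomial.T t := by
    intro a ha t; rw [ha, _root_.map_one, one_mul]
  have hMaTop : Ma ^ (2 * k + 1) =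
      !![LaurentPolynomial.T ((2 * k + 1 : ℕ)), 0; 0, LaurentPolynomial.T ((2 * k + 1 : ℕ))] := by
    rw [hMa, hC1 _ (by rw [show (-θ * ((2 * k + 1 : ℕ) : ℤ)) = (2 * k + 1 : ℕ) * (-θ) by ring, hper]),
      hC1 _ (by rw [show (θ * ((2 * k + 1 : ℕ) : ℤ)) = (2 * k + 1 : ℕ) * θ by ring, hper])]
  have hT : ∀ a b : ℤ, a = b → (LaurentPolynomial.T a : LaurentPolynomial ℂ) =
      LaurentPolynomial.T b := fun a b h => by rw [h]
  have hCT : ∀ a b t s : ℤ,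
      (LaurentPolynomial.C (ξ ^ a) * LaurentPolynomial.T t) *
        (LaurentPolynomial.C (ξ ^ b) * LaurentPolynomial.T s) =
        LaurentPolynomial.C (ξ ^ (a + b)) * LaurentPolynomial.T (t + s) := by
    intro a b t s
    rw [mul_mul_mul_comm, ← _root_.map_mul, hmul, ← T_add]
  have hTT : ∀ a b : ℤ, a + b = 0 → (LaurentPolynomial.T a * LaurentPolynomial.T b :
      LaurentPolynomial ℂ) = 1 := by
    intro a b h; rw [← T_add, h, T_zero]
  have hMb2 : Mb ^ 2 = !![LaurentPolynomial.T (-((2 * k + 1 : ℕ) : ℤ)), 0;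
      0, LaurentPolynomial.T (-((2 * k + 1 : ℕ) : ℤ))] := by
    show (!![_,_;_,_] : Matrix (Fin 2) (Fin 2) (LaurentPolynomial ℂ)) ^ 2 = _
    rw [pow_two, Matrix.mul_fin_two]
    simp only [mul_zero, zero_mul, add_zero, zero_add, hCT]
    rw [hC1 _ (by rw [show ((k : ℤ) * θ + -(k : ℤ) * θ) = (2 * k + 1 : ℕ) * 0 by ring, hper]),
      hC1 _ (by rw [show (-(k : ℤ) * θ + (k : ℤ) * θ) = (2 * k + 1 : ℕ) * 0 by ring, hper]),
      hT (-((k : ℤ) + 1) + -(k : ℤ)) (-((2 * k + 1 : ℕ) : ℤ)) (by push_cast; ring),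
      hT (-(k : ℤ) + -((k : ℤ) + 1)) (-((2 * k + 1 : ℕ) : ℤ)) (by push_cast; ring)]
  have rel1 : Ma ^ (2 * k + 1) * Mb ^ 2 = 1 := by
    rw [hMaTop, hMb2, Matrix.mul_fin_two]
    simp only [mul_zero, zero_mul, add_zero, zero_add]
    rw [hTT _ _ (by ring), Matrix.one_fin_two]
  set N : Matrix (Fin 2) (Fin 2) (LaurentPolynomial ℂ) :=
    !![0, LaurentPolynomial.T (-1 : ℤ); 1, 0] with hNdef
  have hN : Ma ^ k * Mb = N := by
    rw [hMa k, Matrix.mul_fin_two]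
    simp only [mul_zero, zero_mul, add_zero, zero_add, hCT]
    rw [hC1 _ (by rw [show (-θ * (k : ℤ) + (k : ℤ) * θ) = (2 * k + 1 : ℕ) * 0 by ring, hper]),
      hC1 _ (by rw [show (θ * (k : ℤ) + -(k : ℤ) * θ) = (2 * k + 1 : ℕ) * 0 by ring, hper]),
      hT ((k : ℤ) + -((k : ℤ) + 1)) (-1) (by ring),
      hT ((k : ℤ) + -(k : ℤ)) 0 (by ring), T_zero]
  have hN2 : N ^ 2 = !![LaurentPolynomial.T (-1 : ℤ), 0; 0, LaurentPolynomial.T (-1 : ℤ)] := by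
    rw [hNdef, pow_two, Matrix.mul_fin_two]
    norm_num
  have hNk : N ^ (2 * k + 1) = !![0, LaurentPolynomial.T (-((k : ℤ) + 1));
      LaurentPolynomial.T (-(k : ℤ)), 0] := by
    rw [pow_succ, pow_mul, hN2, diag_pow, T_pow, hNdef, Matrix.mul_fin_two]
    simp only [mul_zero, zero_mul, add_zero, zero_add, mul_one, ← T_add]
    rw [hT ((k : ℤ) * (-1) + -1) (-((k : ℤ) + 1)) (by ring),
      hT ((k : ℤ) * (-1)) (-(k : ℤ)) (by ring)]
  have rel2 : (Ma ^ k * Mb) ^ (2 * k + 1) * Ma ^ (2 * k + 1) * (Ma ^ k * Mb) ^ (2 * k + 1)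
      = 1 := by
    rw [hN, hNk, hMaTop, Matrix.mul_fin_two]
    simp only [mul_zero, zero_mul, add_zero, zero_add]
    rw [← T_add, ← T_add, Matrix.mul_fin_two]
    simp only [mul_zero, zero_mul, add_zero, zero_add]
    rw [hTT _ _ (by push_cast; ring), hTT _ _ (by push_cast; ring), Matrix.one_fin_two]
  refine ⟨rel1, rel2, ?_⟩
  have hu : ∀ (a t : ℤ), IsUnit (LaurentPolynomial.C (ξ ^ a) * LaurentPolynomial.T t :
      LaurentPolynomial ℂ) := fun a t =>
    ((zpow_ne_zero a hξ0).isUnit.map LaurentPolynomial.C).mul (isUnit_T t)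
  have hA : IsUnit Ma := by
    rw [Matrix.isUnit_iff_isUnit_det, Matrix.det_fin_two_of]
    simp only [mul_zero, zero_mul, sub_zero]
    exact (hu _ _).mul (hu _ _)
  have hB : IsUnit Mb := by
    rw [Matrix.isUnit_iff_isUnit_det, Matrix.det_fin_two_of]
    simp only [mul_zero, zero_mul, zero_sub]
    exact ((hu _ _).mul (hu _ _)).neg
  set f : Fin 2 → (Matrix (Fin 2) (Fin 2) (LaurentPolynomial ℂ))ˣ := ![hA.unit, hB.unit]
    with hf
  have hrel : ∀ r ∈ G0Rels k, FreeGroup.lift f r = 1 := by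
    intro r hr
    simp only [G0Rels, Set.mem_insert_iff, Set.mem_singleton_iff] at hr
    rcases hr with rfl | rfl <;> apply Units.ext <;>
      simp only [_root_.map_mul, _root_.map_pow, FreeGroup.lift_apply_of, Units.val_mul,
        Units.val_pow_eq_pow_val, Units.val_one, hf, Matrix.cons_val_zero,
        Matrix.cons_val_one, Matrix.head_cons, IsUnit.unit_spec]
    · exact rel1
    · exact rel2
  refine ⟨(Units.coeHom _).comp (PresentedGroup.toGroup hrel), ?_, ?_, fun g => ?_⟩
  · simp [PresentedGroup.toGroup.of, hf]
  · simp [PresentedGroup.toGroup.of, hf]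
  · exact (PresentedGroup.toGroup hrel g).isUnit
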